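/- (Corollary 4.3, entropy form of the log-likelihood.) Let p be a distribution on T having exponential form over C = {X_1,…,X_k}, and let D be a dataset such that p(X_i = 1) = fr(X_i|D) for i = 1,…,k. Then log₂ p(D) = −|D|·H(p). -/

import Mathlib

open scoped BigOperators

/-- A transaction over `N` items: an element of `{0,1}^N`. -/
abbrev Transaction (N : ℕ) := Fin N → Bool

/-- A transaction `t` supports an itemset `X` iff `t i = 1` for all `i ∈ X`. -/
def supports {N : ℕ} (X : Finset (Fin N)) (t : Transaction N) : Prop :=
  ∀ i ∈ X, t i = true

instance {N : ℕ} (X : Finset (Fin N)) (t : Transaction N) : Decidable (supports X t) :=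
  inferInstanceAs (Decidable (∀ i ∈ X, t i = true))

/-- A distribution on `{0,1}^N`: values in `[0,1]` summing to one. -/
def IsDistr {N : ℕ} (p : Transaction N → ℝ) : Prop :=
  (∀ t, 0 ≤ p t ∧ p t ≤ 1) ∧ ∑ t, p t = 1

/-- `p(X = 1)`: the probability that a transaction supports `X`. -/
def probOne {N : ℕ} (p : Transaction N → ℝ) (X : Finset (Fin N)) : ℝ :=
  ∑ t, if supports X t then p t else 0

/-- Binary entropy `H(p) = -∑ p(t) log₂ p(t)` (with `0·log₂ 0 = 0`, as `Real.logb 2 0 = 0`). -/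
noncomputable def entropy {N : ℕ} (p : Transaction N → ℝ) : ℝ :=
  - ∑ t, p t * Real.logb 2 (p t)

/-- Frequency of an itemset in a dataset (a multiset of transactions). -/
noncomputable def freq {N : ℕ} (X : Finset (Fin N)) (D : Multiset (Transaction N)) : ℝ :=
  (D.countP (fun t => supports X t) : ℝ) / (Multiset.card D : ℝ)

/-- Likelihood of a dataset: `p(D) = ∏_{t ∈ D} p(t)`. -/
noncomputable def lhd {N : ℕ} (p : Transaction N → ℝ) (D : Multiset (Transaction N)) : ℝ :=
  (D.map p).prod

/-- `p` has exponential form over the indexed collection `X_1, …, X_k`. -/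
def ExpFormIdx {N k : ℕ} (X : Fin k → Finset (Fin N)) (p : Transaction N → ℝ) : Prop :=
  ∃ u0 : ℝ, ∃ u : Fin k → ℝ, 0 < u0 ∧ (∀ i, 0 < u i) ∧
    ∀ t, p t = u0 * ∏ i, if supports (X i) t then u i else 1


private lemma multiset_logb_prod {α : Type*} (D : Multiset α) (f : α → ℝ)
    (hf : ∀ a, f a ≠ 0) :
    Real.logb 2 ((D.map f).prod) = (D.map (fun a => Real.logb 2 (f a))).sum := by
  induction D using Multiset.induction_on with
  | empty => simp
  | cons a s ih =>
    have hs : (s.map f).prod ≠ 0 := by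
      rw [Ne, Multiset.prod_eq_zero_iff]
      simp only [Multiset.mem_map, not_exists, not_and]
      intro b _ hb
      exact hf b hb
    simp [Real.logb_mul (hf a) hs, ih]

private lemma multiset_sum_map_ite {α : Type*} (D : Multiset α) (P : α → Prop)
    [DecidablePred P] (c : ℝ) :
    (D.map (fun a => if P a then c else 0)).sum = c * (D.countP P : ℝ) := by
  induction D using Multiset.induction_on with
  | empty => simp
  | cons a s ih =>
    by_cases h : P a <;> simp [h, ih, Multiset.countP_cons] <;> push_cast <;> ring

private lemma multiset_sum_map_finsum {α : Type*} {k : ℕ} (D : Multiset α) (g : Fin k → α → ℝ) :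
    (D.map (fun a => ∑ i, g i a)).sum = ∑ i, (D.map (g i)).sum := by
  induction D using Multiset.induction_on with
  | empty => simp
  | cons a s ih => simp [ih, Finset.sum_add_distrib]

/-- Corollary 4.3 (entropy form of the log-likelihood). -/
theorem loglik_entropy_form {N k : ℕ} (hN : 1 ≤ N)
    (X : Fin k → Finset (Fin N))
    (p : Transaction N → ℝ) (hp : IsDistr p) (hform : ExpFormIdx X p)
    (D : Multiset (Transaction N)) (hD : D ≠ 0)
    (hcons : ∀ i, probOne p (X i) = freq (X i) D) :
    Real.logb 2 (lhd p D) = -(Multiset.card D : ℝ) * entropy p := by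
  obtain ⟨u0, u, hu0, hu, hpform⟩ := hform
  have hppos : ∀ t, 0 < p t := by
    intro t
    rw [hpform t]
    apply mul_pos hu0
    apply Finset.prod_pos
    intro i _
    split
    · exact hu i
    · exact one_pos
  have hlog : ∀ t, Real.logb 2 (p t) =
      Real.logb 2 u0 + ∑ i, (if supports (X i) t then Real.logb 2 (u i) else 0) := by
    intro t
    have hne : ∀ i ∈ (Finset.univ : Finset (Fin k)),
        (if supports (X i) t then u i else 1) ≠ 0 := by
      intro i _; split
      · exact (hu i).ne'
      · exact one_ne_zero
    have hprodne : (∏ i, if supports (X i) t then u i else 1) ≠ 0 :=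
      Finset.prod_ne_zero_iff.mpr hne
    rw [hpform t, Real.logb_mul hu0.ne' hprodne]
    congr 1
    rw [Real.logb, Real.log_prod hne, Finset.sum_div]
    apply Finset.sum_congr rfl
    intro i _
    split
    · rfl
    · simp
  set cD : ℝ := (Multiset.card D : ℝ) with hcD
  have hcDpos : 0 < cD := by
    have h := Multiset.card_pos.mpr hD
    rw [hcD]
    exact_mod_cast h
  -- LHS
  have hLHS : Real.logb 2 (lhd p D) =
      cD * Real.logb 2 u0 +
        ∑ i, Real.logb 2 (u i) * (D.countP (fun t => supports (X i) t) : ℝ) := by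
    rw [lhd, multiset_logb_prod D p (fun t => (hppos t).ne')]
    simp only [hlog]
    rw [Multiset.sum_map_add, multiset_sum_map_finsum]
    congr 1
    · simp [Multiset.map_const', Multiset.sum_replicate, nsmul_eq_mul, mul_comm]
      exact Or.inl hcD.symm
    · exact Finset.sum_congr rfl fun i _ => multiset_sum_map_ite D _ _
  -- RHS
  have hprob : ∀ i, probOne p (X i) = (D.countP (fun t => supports (X i) t) : ℝ) / cD :=
    fun i => hcons i
  have hRHS : -cD * entropy p =
      cD * Real.logb 2 u0 +
        ∑ i, Real.logb 2 (u i) * (D.countP (fun t => supports (X i) t) : ℝ) := by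
    rw [entropy]
    have hsum : ∑ t, p t * Real.logb 2 (p t) =
        Real.logb 2 u0 + ∑ i, Real.logb 2 (u i) * probOne p (X i) := by
      simp only [hlog]
      rw [Finset.sum_congr rfl (fun t _ => mul_add (p t) _ _), Finset.sum_add_distrib]
      congr 1
      · rw [← Finset.sum_mul, hp.2, one_mul]
      · rw [Finset.sum_congr rfl (fun t _ => Finset.mul_sum _ _ _), Finset.sum_comm]
        apply Finset.sum_congr rfl
        intro i _
        rw [probOne, Finset.mul_sum]
        apply Finset.sum_congr rfl
        intro t _
        split <;> ring
    rw [hsum, neg_mul_neg, mul_add]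
    congr 1
    rw [Finset.mul_sum]
    have hne := hcDpos.ne'
    apply Finset.sum_congr rfl
    intro i _
    rw [hprob i]
    field_simp
  rw [hLHS, hRHS]
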